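/- Let h : ℝ → ℝ be twice differentiable and let L_{hh'} be a constant with √(h'(x₁)²h'(x₂)² + h(x₁)²h''(x₂)²) ≤ L_{hh'} for all (x₁,x₂) ∈ ℝ². Then for every u, θ ∈ ℝ^d and all W₁, W₂ ∈ ℝ^{d×d}, ‖( h'(W₁u)h(W₁u)^T − h'(W₂u)h(W₂u)^T )·θ‖₂ ≤ √(2d)·L_{hh'}·‖θ‖₂·‖u‖₂·‖W₁ − W₂‖_F, where h and h' are applied entrywise. -/

import Mathlib

open Matrix

/-- Frobenius norm of a real matrix. -/
noncomputable def frobNorm {m n : ℕ} (A : Matrix (Fin m) (Fin n) ℝ) : ℝ :=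
  Real.sqrt (∑ j, ∑ k, (A j k) ^ 2)

/-- Euclidean norm of a vector in ℝ^n. -/
noncomputable def vecNorm {n : ℕ} (x : Fin n → ℝ) : ℝ :=
  Real.sqrt (∑ j, (x j) ^ 2)

lemma lip_aux (h : ℝ → ℝ) (hd1 : Differentiable ℝ h)
    (hd2 : Differentiable ℝ (deriv h)) (Lhh : ℝ)
    (hLhh : ∀ x₁ x₂ : ℝ,
      Real.sqrt ((deriv h x₁ * deriv h x₂) ^ 2 + (h x₁ * deriv (deriv h) x₂) ^ 2) ≤ Lhh)
    (a b c e : ℝ) :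
    |deriv h a * h b - deriv h c * h e| ≤ Lhh * Real.sqrt ((a - c) ^ 2 + (b - e) ^ 2) := by
  set g : ℝ → ℝ := fun t => deriv h (c + t * (a - c)) * h (e + t * (b - e)) with hg
  set g' : ℝ → ℝ := fun t =>
    deriv (deriv h) (c + t * (a - c)) * (a - c) * h (e + t * (b - e)) +
      deriv h (c + t * (a - c)) * (deriv h (e + t * (b - e)) * (b - e)) with hg'
  have hder : ∀ t : ℝ, HasDerivAt g (g' t) t := by
    intro t
    have h1 : HasDerivAt (fun t : ℝ => c + t * (a - c)) (a - c) t := by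
      exact (((hasDerivAt_id' t).mul_const (a - c)).const_add c).congr_deriv (one_mul _)
    have h2 : HasDerivAt (fun t : ℝ => e + t * (b - e)) (b - e) t := by
      exact (((hasDerivAt_id' t).mul_const (b - e)).const_add e).congr_deriv (one_mul _)
    have h3 : HasDerivAt (fun t : ℝ => deriv h (c + t * (a - c)))
        (deriv (deriv h) (c + t * (a - c)) * (a - c)) t :=
      (hd2 _).hasDerivAt.comp t h1
    have h4 : HasDerivAt (fun t : ℝ => h (e + t * (b - e)))
        (deriv h (e + t * (b - e)) * (b - e)) t :=
      (hd1 _).hasDerivAt.comp t h2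
    exact h3.mul h4
  have hbound : ∀ t : ℝ, |g' t| ≤ Lhh * Real.sqrt ((a - c) ^ 2 + (b - e) ^ 2) := by
    intro t
    set x₂ := c + t * (a - c)
    set x₁ := e + t * (b - e)
    set P := h x₁ * deriv (deriv h) x₂
    set Q := deriv h x₁ * deriv h x₂
    have hgt : g' t = P * (a - c) + Q * (b - e) := by simp [g', P, Q, x₁, x₂]; ring
    have hsq : (P * (a - c) + Q * (b - e)) ^ 2 ≤
        (Q ^ 2 + P ^ 2) * ((a - c) ^ 2 + (b - e) ^ 2) := by
      nlinarith [sq_nonneg (P * (b - e) - Q * (a - c))]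
    have h5 : |g' t| = Real.sqrt ((P * (a - c) + Q * (b - e)) ^ 2) := by
      rw [hgt, Real.sqrt_sq_eq_abs]
    rw [h5]
    calc Real.sqrt ((P * (a - c) + Q * (b - e)) ^ 2)
        ≤ Real.sqrt ((Q ^ 2 + P ^ 2) * ((a - c) ^ 2 + (b - e) ^ 2)) :=
          Real.sqrt_le_sqrt hsq
      _ = Real.sqrt (Q ^ 2 + P ^ 2) * Real.sqrt ((a - c) ^ 2 + (b - e) ^ 2) :=
          Real.sqrt_mul (by positivity) _
      _ ≤ Lhh * Real.sqrt ((a - c) ^ 2 + (b - e) ^ 2) := by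
          apply mul_le_mul_of_nonneg_right _ (Real.sqrt_nonneg _)
          simpa [Q, P] using hLhh x₁ x₂
  have := Convex.norm_image_sub_le_of_norm_hasDerivWithin_le
    (f := g) (f' := g') (C := Lhh * Real.sqrt ((a - c) ^ 2 + (b - e) ^ 2))
    (s := Set.univ) (fun x _ => (hder x).hasDerivWithinAt)
    (fun x _ => by simpa using hbound x) convex_univ (Set.mem_univ 0) (Set.mem_univ 1)
  simpa [g] using this

theorem stmt14 {d : ℕ} (h : ℝ → ℝ) (hd1 : Differentiable ℝ h)
    (hd2 : Differentiable ℝ (deriv h)) (Lhh : ℝ)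
    (hLhh : ∀ x₁ x₂ : ℝ,
      Real.sqrt ((deriv h x₁ * deriv h x₂) ^ 2 + (h x₁ * deriv (deriv h) x₂) ^ 2) ≤ Lhh)
    (u θ : Fin d → ℝ) (W₁ W₂ : Matrix (Fin d) (Fin d) ℝ) :
    vecNorm (fun i => ∑ j,
        (deriv h ((W₁ *ᵥ u) i) * h ((W₁ *ᵥ u) j) -
          deriv h ((W₂ *ᵥ u) i) * h ((W₂ *ᵥ u) j)) * θ j) ≤
      Real.sqrt (2 * d) * Lhh * vecNorm θ * vecNorm u * frobNorm (W₁ - W₂) := by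
  have hLnn : 0 ≤ Lhh := le_trans (Real.sqrt_nonneg _) (hLhh 0 0)
  set v₁ := W₁ *ᵥ u
  set v₂ := W₂ *ᵥ u
  set δ : Fin d → ℝ := fun i => v₁ i - v₂ i with hδ
  set Θ := ∑ j, (θ j) ^ 2 with hΘ
  set U := ∑ j, (u j) ^ 2 with hU
  set F2 := ∑ j, ∑ k, ((W₁ - W₂) j k) ^ 2 with hF2
  set S := ∑ i, (δ i) ^ 2 with hS
  have hΘnn : 0 ≤ Θ := Finset.sum_nonneg fun _ _ => sq_nonneg _
  have hUnn : 0 ≤ U := Finset.sum_nonneg fun _ _ => sq_nonneg _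
  have hF2nn : 0 ≤ F2 := Finset.sum_nonneg fun _ _ =>
    Finset.sum_nonneg fun _ _ => sq_nonneg _
  have hSnn : 0 ≤ S := Finset.sum_nonneg fun _ _ => sq_nonneg _
  -- Step 4: S ≤ F2 * U
  have hstep4 : S ≤ F2 * U := by
    rw [hS, hF2, Finset.sum_mul]
    apply Finset.sum_le_sum
    intro i _
    have : δ i = ∑ j, (W₁ - W₂) i j * u j := by
      simp [δ, v₁, v₂, mulVec, dotProduct, Matrix.sub_apply, sub_mul, Finset.sum_sub_distrib]
    rw [this]
    exact Finset.sum_mul_sq_le_sq_mul_sq _ _ _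
  -- main per-row bound
  set f : Fin d → ℝ := fun i => ∑ j,
      (deriv h (v₁ i) * h (v₁ j) - deriv h (v₂ i) * h (v₂ j)) * θ j with hf
  have hrow : ∀ i, (f i) ^ 2 ≤ Lhh ^ 2 * (∑ j, ((δ i) ^ 2 + (δ j) ^ 2)) * Θ := by
    intro i
    have h1 : |f i| ≤ ∑ j, (Lhh * Real.sqrt ((δ i) ^ 2 + (δ j) ^ 2)) * |θ j| := by
      refine le_trans (Finset.abs_sum_le_sum_abs _ _) (Finset.sum_le_sum fun j _ => ?_)
      rw [abs_mul]
      refine mul_le_mul_of_nonneg_right ?_ (abs_nonneg _)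
      simpa [δ] using lip_aux h hd1 hd2 Lhh hLhh (v₁ i) (v₁ j) (v₂ i) (v₂ j)
    have h2 : (f i) ^ 2 ≤ (∑ j, (Lhh * Real.sqrt ((δ i) ^ 2 + (δ j) ^ 2)) * |θ j|) ^ 2 := by
      rw [← sq_abs (f i)]
      apply pow_le_pow_left₀ (abs_nonneg _) h1
    refine h2.trans ?_
    refine (Finset.sum_mul_sq_le_sq_mul_sq _ _ _).trans_eq ?_
    have h3 : ∀ j : Fin d, (Lhh * Real.sqrt ((δ i) ^ 2 + (δ j) ^ 2)) ^ 2 =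
        Lhh ^ 2 * ((δ i) ^ 2 + (δ j) ^ 2) := by
      intro j
      rw [mul_pow, Real.sq_sqrt (by positivity)]
    simp_rw [h3, sq_abs, ← Finset.mul_sum]
    rfl
  -- sum over i
  have hsum : ∑ i, (f i) ^ 2 ≤ 2 * d * Lhh ^ 2 * Θ * (F2 * U) := by
    have h4 : ∑ i, (f i) ^ 2 ≤ ∑ i, Lhh ^ 2 * (∑ j, ((δ i) ^ 2 + (δ j) ^ 2)) * Θ :=
      Finset.sum_le_sum fun i _ => hrow i
    have h5 : ∑ i, Lhh ^ 2 * (∑ j, ((δ i) ^ 2 + (δ j) ^ 2)) * Θ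
        = 2 * d * Lhh ^ 2 * Θ * S := by
      have : ∀ i : Fin d, ∑ j, ((δ i) ^ 2 + (δ j) ^ 2) = d * (δ i) ^ 2 + S := by
        intro i
        rw [Finset.sum_add_distrib, Finset.sum_const, Finset.card_univ, Fintype.card_fin,
          nsmul_eq_mul, hS]
      simp_rw [this]
      rw [Finset.sum_congr rfl (fun i _ => by ring :
        ∀ i ∈ Finset.univ, Lhh ^ 2 * ((d : ℝ) * (δ i) ^ 2 + S) * Θ
          = Lhh ^ 2 * Θ * (d : ℝ) * (δ i) ^ 2 + Lhh ^ 2 * S * Θ)]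
      rw [Finset.sum_add_distrib, ← Finset.mul_sum, Finset.sum_const, Finset.card_univ,
        Fintype.card_fin, nsmul_eq_mul, ← hS]
      ring
    refine h4.trans (h5.le.trans ?_)
    exact mul_le_mul_of_nonneg_left hstep4 (by positivity)
  -- conclude
  have hRHSnn : 0 ≤ Real.sqrt (2 * d) * Lhh * vecNorm θ * vecNorm u * frobNorm (W₁ - W₂) := by
    unfold vecNorm frobNorm
    exact mul_nonneg (mul_nonneg (mul_nonneg (mul_nonneg (Real.sqrt_nonneg _) hLnn)
      (Real.sqrt_nonneg _)) (Real.sqrt_nonneg _)) (Real.sqrt_nonneg _)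
  have hEq : (Real.sqrt (2 * d) * Lhh * vecNorm θ * vecNorm u * frobNorm (W₁ - W₂)) ^ 2
      = 2 * d * Lhh ^ 2 * Θ * (F2 * U) := by
    unfold vecNorm frobNorm
    rw [← hΘ, ← hU, ← hF2]
    rw [mul_pow, mul_pow, mul_pow, mul_pow,
      Real.sq_sqrt (by positivity : (0:ℝ) ≤ 2 * d), Real.sq_sqrt hΘnn, Real.sq_sqrt hUnn,
      Real.sq_sqrt hF2nn]
    ring
  calc vecNorm f = Real.sqrt (∑ i, (f i) ^ 2) := rfl
    _ ≤ Real.sqrt (2 * d * Lhh ^ 2 * Θ * (F2 * U)) := Real.sqrt_le_sqrt hsum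
    _ = _ := by rw [← hEq, Real.sqrt_sq hRHSnn]
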